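/- Let [F̲,F̄] be a p-box with F̲, F̄ continuous and strictly increasing on their supports, and let h : ℝ → ℝ be continuous, increasing on (-∞,a] and decreasing on [a,∞). Then the upper expectation of h over Φ(F̲,F̄) equals ∫_{-∞}^a h dF̲ + h(a)·(F̄(a) − F̲(a)) + ∫_a^∞ h dF̄, and this value is attained by the distribution F* defined by F*(x) = F̲(x) for x < a, F*(x) = F̄(x) for x ≥ a. -/

import Mathlib

open Set Filter MeasureTheory
open scoped ENNReal Topology

namespace UpperExpAux

lemma leftLim_eq_of_continuous (f : StieltjesFunction ℝ) (hf : Continuous f) (x : ℝ) :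
    Function.leftLim f x = f x :=
  tendsto_nhds_unique (f.mono.tendsto_leftLim x)
    ((hf.tendsto x).mono_left nhdsWithin_le_nhds)

lemma measure_Iio' (f : StieltjesFunction ℝ) {l : ℝ} (hf : Tendsto f atBot (𝓝 l)) (x : ℝ) :
    f.measure (Iio x) = ENNReal.ofReal (Function.leftLim f x - l) := by
  have hll : l ≤ Function.leftLim f x :=
    le_trans (f.mono.le_of_tendsto hf (x - 1)) (f.mono.le_leftLim (by linarith))
  have hlf : Function.leftLim f x ≤ f x := f.mono.leftLim_le le_rfl
  have h1 : f.measure (Iic x) = ENNReal.ofReal (f x - l) := f.measure_Iic hf x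
  have h2 : f.measure {x} = ENNReal.ofReal (f x - Function.leftLim f x) :=
    f.measure_singleton x
  have hdiff : f.measure (Iio x) = f.measure (Iic x) - f.measure {x} := by
    rw [← Iic_diff_right]
    refine measure_diff (by simp) (measurableSet_singleton x).nullMeasurableSet ?_
    rw [h2]; exact ENNReal.ofReal_ne_top
  rw [hdiff, h1, h2, ← ENNReal.ofReal_sub _ (by linarith)]
  congr 1; ring

lemma measure_Ioi' (f : StieltjesFunction ℝ) {u : ℝ} (hf : Tendsto f atTop (𝓝 u)) (x : ℝ) :
    f.measure (Ioi x) = ENNReal.ofReal (u - f x) := by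
  have h1 : f.measure (Ici x) = ENNReal.ofReal (u - Function.leftLim f x) := f.measure_Ici hf x
  have hfu : f x ≤ u := f.mono.ge_of_tendsto hf x
  have hlf : Function.leftLim f x ≤ f x := f.mono.leftLim_le le_rfl
  have hdiff : f.measure (Ioi x) = f.measure (Ici x) - f.measure {x} := by
    rw [← Ici_sdiff_left]
    refine measure_diff (by simp) (measurableSet_singleton x).nullMeasurableSet ?_
    rw [f.measure_singleton]; exact ENNReal.ofReal_ne_top
  rw [hdiff, h1, f.measure_singleton, ← ENNReal.ofReal_sub _ (by linarith)]
  congr 1; ring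

noncomputable def sf1 (h : ℝ → ℝ) (a : ℝ) (hcont : Continuous h)
    (hmono : MonotoneOn h (Iic a)) : StieltjesFunction ℝ where
  toFun x := h (min x a)
  mono' x y hxy := hmono (min_le_right x a) (min_le_right y a) (min_le_min hxy le_rfl)
  right_continuous' x :=
    ((hcont.comp (continuous_id.min continuous_const)).continuousAt).continuousWithinAt

@[simp] lemma sf1_apply (h : ℝ → ℝ) (a : ℝ) (hcont : Continuous h)
    (hmono : MonotoneOn h (Iic a)) (x : ℝ) : sf1 h a hcont hmono x = h (min x a) := rfl

noncomputable def sf2 (h : ℝ → ℝ) (a : ℝ) (hcont : Continuous h)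
    (hanti : AntitoneOn h (Ici a)) : StieltjesFunction ℝ where
  toFun x := - h (max x a)
  mono' x y hxy := neg_le_neg
    (hanti (le_max_right x a) (le_max_right y a) (max_le_max hxy le_rfl))
  right_continuous' x :=
    (((hcont.comp (continuous_id.max continuous_const)).neg).continuousAt).continuousWithinAt

@[simp] lemma sf2_apply (h : ℝ → ℝ) (a : ℝ) (hcont : Continuous h)
    (hanti : AntitoneOn h (Ici a)) (x : ℝ) : sf2 h a hcont hanti x = - h (max x a) := rfl

end UpperExpAux

namespace UpperExpAux

lemma key (h : ℝ → ℝ) (a : ℝ) (hcont : Continuous h)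
    (hmono : MonotoneOn h (Iic a)) (hanti : AntitoneOn h (Ici a))
    (C : ℝ) (hbd : ∀ x, |h x| ≤ C)
    (μ : Measure ℝ) [IsFiniteMeasure μ] :
    ∫ x, h x ∂μ = h a * (μ univ).toReal
      - (∫⁻ t in Iic a, μ (Iio t) ∂(sf1 h a hcont hmono).measure).toReal
      - (∫⁻ t in Ioi a, μ (Ici t) ∂(sf2 h a hcont hanti).measure).toReal := by
  set ν₁ := (sf1 h a hcont hmono).measure with hν₁def
  set ν₂ := (sf2 h a hcont hanti).measure with hν₂def
  set g₁ : ℝ → ℝ := fun x => h a - h (min x a) with hg₁def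
  set g₂ : ℝ → ℝ := fun x => h a - h (max x a) with hg₂def
  have hg₁c : Continuous g₁ := by
    exact continuous_const.sub (hcont.comp (continuous_id.min continuous_const))
  have hg₂c : Continuous g₂ := by
    exact continuous_const.sub (hcont.comp (continuous_id.max continuous_const))
  have hg₁nn : ∀ x, 0 ≤ g₁ x := fun x =>
    sub_nonneg.2 (hmono (min_le_right x a) (le_refl a) (min_le_right x a))
  have hg₂nn : ∀ x, 0 ≤ g₂ x := fun x =>
    sub_nonneg.2 (hanti (le_refl a) (le_max_right x a) (le_max_right x a))
  have hintmin : Integrable (fun x => h (min x a)) μ := by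
    refine Integrable.mono' (integrable_const C)
      (hcont.comp (continuous_id.min continuous_const)).aestronglyMeasurable ?_
    exact ae_of_all _ fun x => by rw [Real.norm_eq_abs]; exact hbd _
  have hintmax : Integrable (fun x => h (max x a)) μ := by
    refine Integrable.mono' (integrable_const C)
      (hcont.comp (continuous_id.max continuous_const)).aestronglyMeasurable ?_
    exact ae_of_all _ fun x => by rw [Real.norm_eq_abs]; exact hbd _
  have hg₁int : Integrable g₁ μ := (integrable_const (h a)).sub hintmin
  have hg₂int : Integrable g₂ μ := (integrable_const (h a)).sub hintmax
  have hrep : ∀ x, h x = h a - g₁ x - g₂ x := by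
    intro x
    rcases le_total x a with hx | hx
    · simp [hg₁def, hg₂def, min_eq_left hx, max_eq_right hx]
    · simp [hg₁def, hg₂def, min_eq_right hx, max_eq_left hx]
  have e1 : ∫ x, g₁ x ∂μ = (∫⁻ t in Iic a, μ (Iio t) ∂ν₁).toReal := by
    rw [integral_eq_lintegral_of_nonneg_ae (ae_of_all _ hg₁nn) hg₁c.aestronglyMeasurable]
    congr 1
    set S : Set (ℝ × ℝ) := {p : ℝ × ℝ | p.1 < p.2} ∩ {p : ℝ × ℝ | p.2 ≤ a} with hSdef
    have hS : MeasurableSet S :=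
      (measurableSet_lt measurable_fst measurable_snd).inter (measurable_snd measurableSet_Iic)
    have step1 : ∀ x, ENNReal.ofReal (g₁ x)
        = ∫⁻ t, S.indicator (fun _ => (1 : ℝ≥0∞)) (x, t) ∂ν₁ := by
      intro x
      have hfun : (fun t => S.indicator (fun _ => (1:ℝ≥0∞)) (x, t))
          = (Ioc x a).indicator (fun _ => 1) := by
        ext t
        by_cases ht : t ∈ Ioc x a
        · rw [indicator_of_mem ht, indicator_of_mem (by exact ⟨ht.1, ht.2⟩)]
        · rw [indicator_of_notMem ht, indicator_of_notMem
            (by simpa [hSdef, mem_Ioc] using ht)]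
      rw [hfun, lintegral_indicator measurableSet_Ioc, setLIntegral_one,
        hν₁def, StieltjesFunction.measure_Ioc]
      simp [hg₁def]
    calc ∫⁻ x, ENNReal.ofReal (g₁ x) ∂μ
        = ∫⁻ x, ∫⁻ t, S.indicator (fun _ => (1:ℝ≥0∞)) (x, t) ∂ν₁ ∂μ := lintegral_congr step1
      _ = ∫⁻ t, ∫⁻ x, S.indicator (fun _ => (1:ℝ≥0∞)) (x, t) ∂μ ∂ν₁ := by
          refine lintegral_lintegral_swap ?_
          exact (measurable_const.indicator hS).aemeasurable
      _ = ∫⁻ t, (Iic a).indicator (fun t => μ (Iio t)) t ∂ν₁ := by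
          refine lintegral_congr fun t => ?_
          by_cases ht : t ∈ Iic a
          · rw [indicator_of_mem ht]
            have hfun : (fun x => S.indicator (fun _ => (1:ℝ≥0∞)) (x, t))
                = (Iio t).indicator (fun _ => 1) := by
              ext x
              by_cases hx : x ∈ Iio t
              · rw [indicator_of_mem hx, indicator_of_mem (by exact ⟨hx, ht⟩)]
              · rw [indicator_of_notMem hx, indicator_of_notMem
                  (by simp only [hSdef, mem_inter_iff, mem_setOf_eq, not_and]
                      intro h1; exact absurd h1 hx)]
            rw [hfun, lintegral_indicator measurableSet_Iio, setLIntegral_one]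
          · rw [indicator_of_notMem ht]
            have hfun : (fun x => S.indicator (fun _ => (1:ℝ≥0∞)) (x, t)) = fun _ => 0 := by
              ext x
              rw [indicator_of_notMem]
              simp only [hSdef, mem_inter_iff, mem_setOf_eq, not_and]
              intro _; exact ht
            rw [hfun, lintegral_zero]
      _ = ∫⁻ t in Iic a, μ (Iio t) ∂ν₁ := lintegral_indicator measurableSet_Iic _
  have e2 : ∫ x, g₂ x ∂μ = (∫⁻ t in Ioi a, μ (Ici t) ∂ν₂).toReal := by
    rw [integral_eq_lintegral_of_nonneg_ae (ae_of_all _ hg₂nn) hg₂c.aestronglyMeasurable]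
    congr 1
    set S : Set (ℝ × ℝ) := {p : ℝ × ℝ | a < p.2} ∩ {p : ℝ × ℝ | p.2 ≤ p.1} with hSdef
    have hS : MeasurableSet S :=
      (measurable_snd measurableSet_Ioi).inter (measurableSet_le measurable_snd measurable_fst)
    have step1 : ∀ x, ENNReal.ofReal (g₂ x)
        = ∫⁻ t, S.indicator (fun _ => (1 : ℝ≥0∞)) (x, t) ∂ν₂ := by
      intro x
      have hfun : (fun t => S.indicator (fun _ => (1:ℝ≥0∞)) (x, t))
          = (Ioc a x).indicator (fun _ => 1) := by
        ext t
        by_cases ht : t ∈ Ioc a x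
        · rw [indicator_of_mem ht, indicator_of_mem (by exact ⟨ht.1, ht.2⟩)]
        · rw [indicator_of_notMem ht, indicator_of_notMem
            (by simpa [hSdef, mem_Ioc] using ht)]
      rw [hfun, lintegral_indicator measurableSet_Ioc, setLIntegral_one,
        hν₂def, StieltjesFunction.measure_Ioc]
      simp [hg₂def, neg_add_eq_sub]
    calc ∫⁻ x, ENNReal.ofReal (g₂ x) ∂μ
        = ∫⁻ x, ∫⁻ t, S.indicator (fun _ => (1:ℝ≥0∞)) (x, t) ∂ν₂ ∂μ := lintegral_congr step1
      _ = ∫⁻ t, ∫⁻ x, S.indicator (fun _ => (1:ℝ≥0∞)) (x, t) ∂μ ∂ν₂ := by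
          refine lintegral_lintegral_swap ?_
          exact (measurable_const.indicator hS).aemeasurable
      _ = ∫⁻ t, (Ioi a).indicator (fun t => μ (Ici t)) t ∂ν₂ := by
          refine lintegral_congr fun t => ?_
          by_cases ht : t ∈ Ioi a
          · rw [indicator_of_mem ht]
            have hfun : (fun x => S.indicator (fun _ => (1:ℝ≥0∞)) (x, t))
                = (Ici t).indicator (fun _ => 1) := by
              ext x
              by_cases hx : x ∈ Ici t
              · rw [indicator_of_mem hx, indicator_of_mem (by exact ⟨ht, hx⟩)]
              · rw [indicator_of_notMem hx, indicator_of_notMem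
                  (by simp only [hSdef, mem_inter_iff, mem_setOf_eq, not_and]
                      intro _ h2; exact hx h2)]
            rw [hfun, lintegral_indicator measurableSet_Ici, setLIntegral_one]
          · rw [indicator_of_notMem ht]
            have hfun : (fun x => S.indicator (fun _ => (1:ℝ≥0∞)) (x, t)) = fun _ => 0 := by
              ext x
              rw [indicator_of_notMem]
              simp only [hSdef, mem_inter_iff, mem_setOf_eq, not_and]
              intro h1; exact absurd h1 ht
            rw [hfun, lintegral_zero]
      _ = ∫⁻ t in Ioi a, μ (Ici t) ∂ν₂ := lintegral_indicator measurableSet_Ioi _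
  calc ∫ x, h x ∂μ = ∫ x, (h a - g₁ x - g₂ x) ∂μ := by
        exact integral_congr_ae (ae_of_all _ hrep)
    _ = (∫ x, (h a - g₁ x) ∂μ) - ∫ x, g₂ x ∂μ :=
        integral_sub ((integrable_const (h a)).sub hg₁int) hg₂int
    _ = ((∫ _, h a ∂μ) - ∫ x, g₁ x ∂μ) - ∫ x, g₂ x ∂μ := by
        rw [integral_sub (integrable_const (h a)) hg₁int]
    _ = h a * (μ univ).toReal
        - (∫⁻ t in Iic a, μ (Iio t) ∂ν₁).toReal
        - (∫⁻ t in Ioi a, μ (Ici t) ∂ν₂).toReal := by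
        rw [integral_const, smul_eq_mul, mul_comm, e1, e2, measureReal_def]

end UpperExpAux

namespace UpperExpAux

lemma nu1_fin (h : ℝ → ℝ) (a : ℝ) (hcont : Continuous h)
    (hmono : MonotoneOn h (Iic a)) (C : ℝ) (hbd : ∀ x, |h x| ≤ C) :
    (sf1 h a hcont hmono).measure (Iic a) ≠ ∞ := by
  have hU : Iic a = ⋃ n : ℕ, Ioc (a - n) a := by
    ext x
    simp only [mem_Iic, mem_iUnion, mem_Ioc]
    constructor
    · intro hx
      obtain ⟨n, hn⟩ := exists_nat_gt (a - x)
      exact ⟨n, by linarith, hx⟩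
    · rintro ⟨n, _, hx⟩; exact hx
  have hdir : Monotone fun n : ℕ => Ioc (a - n) a := by
    intro m n hmn
    exact Ioc_subset_Ioc_left (by simp only [sub_le_sub_iff_left, Nat.cast_le]; exact hmn)
  rw [hU, hdir.directed_le.measure_iUnion]
  refine ne_top_of_le_ne_top (@ENNReal.ofReal_ne_top (2 * C)) ?_
  refine iSup_le fun n => ?_
  rw [StieltjesFunction.measure_Ioc]
  apply ENNReal.ofReal_le_ofReal
  have h1 := abs_le.1 (hbd a)
  have h2 := abs_le.1 (hbd (min (a - n) a))
  simp only [sf1_apply, min_self]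
  linarith

lemma nu2_fin (h : ℝ → ℝ) (a : ℝ) (hcont : Continuous h)
    (hanti : AntitoneOn h (Ici a)) (C : ℝ) (hbd : ∀ x, |h x| ≤ C) :
    (sf2 h a hcont hanti).measure (Ioi a) ≠ ∞ := by
  have hU : Ioi a = ⋃ n : ℕ, Ioc a (a + n) := by
    ext x
    simp only [mem_Ioi, mem_iUnion, mem_Ioc]
    constructor
    · intro hx
      obtain ⟨n, hn⟩ := exists_nat_gt (x - a)
      exact ⟨n, hx, by linarith⟩
    · rintro ⟨n, hx, _⟩; exact hx
  have hdir : Monotone fun n : ℕ => Ioc a (a + n) := by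
    intro m n hmn
    exact Ioc_subset_Ioc_right (by simp only [add_le_add_iff_left, Nat.cast_le]; exact hmn)
  rw [hU, hdir.directed_le.measure_iUnion]
  refine ne_top_of_le_ne_top (@ENNReal.ofReal_ne_top (2 * C)) ?_
  refine iSup_le fun n => ?_
  rw [StieltjesFunction.measure_Ioc]
  apply ENNReal.ofReal_le_ofReal
  have h1 := abs_le.1 (hbd (max (a + n) a))
  have h2 := abs_le.1 (hbd (max a a))
  simp only [sf2_apply]
  linarith

end UpperExpAux

open UpperExpAux

/-- Upper expectation of a function with a single maximum at `a`:
it equals `∫_{-∞}^a h dF̲ + h(a)(F̄(a)−F̲(a)) + ∫_a^∞ h dF̄` and is attained by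
the distribution following `F̲` before `a` and `F̄` from `a` on. -/
theorem upper_expectation_one_maximum
    (Fl Fu : StieltjesFunction ℝ)
    (hFl : Tendsto Fl atBot (nhds 0) ∧ Tendsto Fl atTop (nhds 1))
    (hFu : Tendsto Fu atBot (nhds 0) ∧ Tendsto Fu atTop (nhds 1))
    (hle : ∀ x, Fl x ≤ Fu x)
    (hFlc : Continuous Fl) (hFuc : Continuous Fu)
    (hFlsm : StrictMonoOn Fl {x | 0 < Fl x ∧ Fl x < 1})
    (hFusm : StrictMonoOn Fu {x | 0 < Fu x ∧ Fu x < 1})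
    (h : ℝ → ℝ) (hcont : Continuous h) (C : ℝ) (hbd : ∀ x, |h x| ≤ C)
    (a : ℝ) (hinc : StrictMonoOn h (Iic a)) (hdec : StrictAntiOn h (Ici a))
    (Φ : Set (StieltjesFunction ℝ))
    (hΦ : Φ = {F : StieltjesFunction ℝ |
        (Tendsto F atBot (nhds 0) ∧ Tendsto F atTop (nhds 1)) ∧
          ∀ x, Fl x ≤ F x ∧ F x ≤ Fu x}) :
    IsGreatest ((fun F : StieltjesFunction ℝ => ∫ x, h x ∂F.measure) '' Φ)
      ((∫ x in Iio a, h x ∂Fl.measure) + h a * (Fu a - Fl a)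
        + ∫ x in Ioi a, h x ∂Fu.measure) ∧
    ∃ Fstar ∈ Φ, (∀ x, Fstar x = if x < a then Fl x else Fu x) ∧
      ∫ x, h x ∂Fstar.measure
        = (∫ x in Iio a, h x ∂Fl.measure) + h a * (Fu a - Fl a)
          + ∫ x in Ioi a, h x ∂Fu.measure := by
  obtain ⟨hFl_bot, hFl_top⟩ := hFl
  obtain ⟨hFu_bot, hFu_top⟩ := hFu
  have hmono : MonotoneOn h (Iic a) := hinc.monotoneOn
  have hanti : AntitoneOn h (Ici a) := hdec.antitoneOn
  set ν₁ := (sf1 h a hcont hmono).measure with hν₁def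
  set ν₂ := (sf2 h a hcont hanti).measure with hν₂def
  haveI hPFl : IsProbabilityMeasure Fl.measure := Fl.isProbabilityMeasure hFl_bot hFl_top
  haveI hPFu : IsProbabilityMeasure Fu.measure := Fu.isProbabilityMeasure hFu_bot hFu_top
  have hFl0 : ∀ x, 0 ≤ Fl x := fun x => Fl.mono.le_of_tendsto hFl_bot x
  have hFu1 : ∀ x, Fu x ≤ 1 := fun x => Fu.mono.ge_of_tendsto hFu_top x
  let Fs : StieltjesFunction ℝ :=
    { toFun := fun x => if x < a then Fl x else Fu x
      mono' := by
        intro x y hxy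
        show (if x < a then Fl x else Fu x) ≤ (if y < a then Fl y else Fu y)
        split_ifs with h1 h2 h2
        · exact Fl.mono hxy
        · exact (Fl.mono h1.le).trans ((hle a).trans (Fu.mono (not_lt.1 h2)))
        · exact absurd (lt_of_le_of_lt hxy h2) h1
        · exact Fu.mono hxy
      right_continuous' := by
        intro x
        by_cases hx : x < a
        · refine ContinuousWithinAt.congr_of_eventuallyEq
            (hFlc.continuousAt.continuousWithinAt) ?_ (if_pos hx)
          filter_upwards [(eventually_lt_nhds hx).filter_mono nhdsWithin_le_nhds] with y hy
          exact if_pos hy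
        · refine ContinuousWithinAt.congr (hFuc.continuousAt.continuousWithinAt) ?_ (if_neg hx)
          intro y hy
          exact if_neg fun h' => hx (lt_of_le_of_lt hy h') }
  have hFs_apply : ∀ x, Fs x = if x < a then Fl x else Fu x := fun x => rfl
  have hFs_bot : Tendsto Fs atBot (𝓝 0) := by
    refine Tendsto.congr' ?_ hFl_bot
    filter_upwards [eventually_lt_atBot a] with x hx
    rw [hFs_apply, if_pos hx]
  have hFs_top : Tendsto Fs atTop (𝓝 1) := by
    refine Tendsto.congr' ?_ hFu_top
    filter_upwards [eventually_ge_atTop a] with x hx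
    rw [hFs_apply, if_neg (not_lt.2 hx)]
  have hFsΦ : Fs ∈ Φ := by
    rw [hΦ]
    refine ⟨⟨hFs_bot, hFs_top⟩, fun x => ?_⟩
    rw [hFs_apply]
    by_cases hx : x < a
    · rw [if_pos hx]; exact ⟨le_rfl, hle x⟩
    · rw [if_neg hx]; exact ⟨hle x, le_rfl⟩
  haveI hPFs : IsProbabilityMeasure Fs.measure := Fs.isProbabilityMeasure hFs_bot hFs_top
  have hllFl : ∀ t : ℝ, Function.leftLim Fl t = Fl t :=
    leftLim_eq_of_continuous Fl hFlc
  have hllFu : ∀ t : ℝ, Function.leftLim Fu t = Fu t :=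
    leftLim_eq_of_continuous Fu hFuc
  have hllFs_le : ∀ t, t ≤ a → Function.leftLim Fs t = Fl t := by
    intro t ht
    refine tendsto_nhds_unique (Fs.mono.tendsto_leftLim t) ?_
    refine Tendsto.congr' ?_ ((hFlc.tendsto t).mono_left nhdsWithin_le_nhds)
    filter_upwards [self_mem_nhdsWithin] with y hy
    rw [hFs_apply, if_pos (lt_of_lt_of_le hy ht)]
  have hllFs_gt : ∀ t, a < t → Function.leftLim Fs t = Fu t := by
    intro t ht
    refine tendsto_nhds_unique (Fs.mono.tendsto_leftLim t) ?_
    refine Tendsto.congr' ?_ ((hFuc.tendsto t).mono_left nhdsWithin_le_nhds)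
    filter_upwards [(eventually_gt_nhds ht).filter_mono nhdsWithin_le_nhds] with y hy
    rw [hFs_apply, if_neg (not_lt.2 hy.le)]
  have hFlIio : ∀ t : ℝ, Fl.measure (Iio t) = ENNReal.ofReal (Fl t) := fun t => by
    rw [measure_Iio' Fl hFl_bot t, hllFl t, sub_zero]
  have hFuIci : ∀ t : ℝ, Fu.measure (Ici t) = ENNReal.ofReal (1 - Fu t) := fun t => by
    rw [Fu.measure_Ici hFu_top t, hllFu t]
  set LA : ℝ≥0∞ := ∫⁻ t in Iic a, ENNReal.ofReal (Fl t) ∂ν₁ with hLAdef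
  set LB : ℝ≥0∞ := ∫⁻ t in Ioi a, ENNReal.ofReal (1 - Fu t) ∂ν₂ with hLBdef
  have hFsval : ∫ x, h x ∂Fs.measure = h a - LA.toReal - LB.toReal := by
    rw [key h a hcont hmono hanti C hbd Fs.measure]
    have hA : ∫⁻ t in Iic a, Fs.measure (Iio t) ∂ν₁ = LA := by
      refine setLIntegral_congr_fun_ae measurableSet_Iic (ae_of_all _ fun t ht => ?_)
      rw [measure_Iio' Fs hFs_bot t, hllFs_le t ht, sub_zero]
    have hB : ∫⁻ t in Ioi a, Fs.measure (Ici t) ∂ν₂ = LB := by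
      refine setLIntegral_congr_fun_ae measurableSet_Ioi (ae_of_all _ fun t ht => ?_)
      rw [Fs.measure_Ici hFs_top t, hllFs_gt t ht]
    rw [hA, hB, measure_univ, ENNReal.toReal_one, mul_one]
  have hres1 : ∫ x in Iio a, h x ∂Fl.measure = h a * Fl a - LA.toReal := by
    rw [key h a hcont hmono hanti C hbd (Fl.measure.restrict (Iio a))]
    have h0 : (Fl.measure.restrict (Iio a)) univ = ENNReal.ofReal (Fl a) := by
      rw [Measure.restrict_apply_univ, hFlIio a]
    have hA : ∫⁻ t in Iic a, (Fl.measure.restrict (Iio a)) (Iio t) ∂ν₁ = LA := by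
      refine setLIntegral_congr_fun_ae measurableSet_Iic (ae_of_all _ fun t ht => ?_)
      rw [Measure.restrict_apply measurableSet_Iio, Iio_inter_Iio, min_eq_left ht, hFlIio t]
    have hB : ∫⁻ t in Ioi a, (Fl.measure.restrict (Iio a)) (Ici t) ∂ν₂ = 0 := by
      have hz : ∫⁻ t in Ioi a, (Fl.measure.restrict (Iio a)) (Ici t) ∂ν₂
          = ∫⁻ _ in Ioi a, (0 : ℝ≥0∞) ∂ν₂ := by
        refine setLIntegral_congr_fun_ae measurableSet_Ioi (ae_of_all _ fun t ht => ?_)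
        rw [Measure.restrict_apply measurableSet_Ici]
        have he : Ici t ∩ Iio a = ∅ := by
          apply eq_empty_of_forall_notMem
          rintro x ⟨hx1, hx2⟩
          exact absurd (lt_trans (lt_of_lt_of_le ht hx1) hx2) (lt_irrefl a)
        rw [he, measure_empty]
      rw [hz, lintegral_zero]
    rw [h0, hA, hB, ENNReal.toReal_zero, sub_zero, ENNReal.toReal_ofReal (hFl0 a)]
  have hres2 : ∫ x in Ioi a, h x ∂Fu.measure = h a * (1 - Fu a) - LB.toReal := by
    rw [key h a hcont hmono hanti C hbd (Fu.measure.restrict (Ioi a))]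
    have h0 : (Fu.measure.restrict (Ioi a)) univ = ENNReal.ofReal (1 - Fu a) := by
      rw [Measure.restrict_apply_univ, measure_Ioi' Fu hFu_top a]
    have hA : ∫⁻ t in Iic a, (Fu.measure.restrict (Ioi a)) (Iio t) ∂ν₁ = 0 := by
      have hz : ∫⁻ t in Iic a, (Fu.measure.restrict (Ioi a)) (Iio t) ∂ν₁
          = ∫⁻ _ in Iic a, (0 : ℝ≥0∞) ∂ν₁ := by
        refine setLIntegral_congr_fun_ae measurableSet_Iic (ae_of_all _ fun t ht => ?_)
        rw [Measure.restrict_apply measurableSet_Iio]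
        have he : Iio t ∩ Ioi a = ∅ := by
          apply eq_empty_of_forall_notMem
          rintro x ⟨hx1, hx2⟩
          exact absurd (lt_of_lt_of_le (lt_trans hx2 hx1) ht) (lt_irrefl a)
        rw [he, measure_empty]
      rw [hz, lintegral_zero]
    have hB : ∫⁻ t in Ioi a, (Fu.measure.restrict (Ioi a)) (Ici t) ∂ν₂ = LB := by
      refine setLIntegral_congr_fun_ae measurableSet_Ioi (ae_of_all _ fun t ht => ?_)
      have he : Ici t ∩ Ioi a = Ici t :=
        inter_eq_left.mpr fun x hx => (lt_of_lt_of_le ht hx : a < x)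
      rw [Measure.restrict_apply measurableSet_Ici, he, hFuIci t]
    rw [h0, hA, hB, ENNReal.toReal_zero, sub_zero,
      ENNReal.toReal_ofReal (by have := hFu1 a; linarith)]
  have hVal : (∫ x in Iio a, h x ∂Fl.measure) + h a * (Fu a - Fl a)
      + ∫ x in Ioi a, h x ∂Fu.measure = ∫ x, h x ∂Fs.measure := by
    rw [hres1, hres2, hFsval]; ring
  have hub : ∀ F ∈ Φ, ∫ x, h x ∂F.measure ≤ ∫ x, h x ∂Fs.measure := by
    intro F hF
    rw [hΦ] at hF
    obtain ⟨⟨hFb, hFt⟩, hbtw⟩ := hF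
    haveI : IsProbabilityMeasure F.measure := F.isProbabilityMeasure hFb hFt
    rw [key h a hcont hmono hanti C hbd F.measure, hFsval, measure_univ,
      ENNReal.toReal_one, mul_one]
    have hAle : LA ≤ ∫⁻ t in Iic a, F.measure (Iio t) ∂ν₁ := by
      refine setLIntegral_mono' measurableSet_Iic fun t ht => ?_
      rw [measure_Iio' F hFb t, sub_zero]
      apply ENNReal.ofReal_le_ofReal
      exact le_of_tendsto_of_tendsto' ((hFlc.tendsto t).mono_left nhdsWithin_le_nhds)
        (F.mono.tendsto_leftLim t) fun x => (hbtw x).1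
    have hBle : LB ≤ ∫⁻ t in Ioi a, F.measure (Ici t) ∂ν₂ := by
      refine setLIntegral_mono' measurableSet_Ioi fun t ht => ?_
      rw [F.measure_Ici hFt t]
      apply ENNReal.ofReal_le_ofReal
      have h1 : Function.leftLim F t ≤ F t := F.mono.leftLim_le le_rfl
      have h2 := (hbtw t).2
      linarith
    have hAfin : (∫⁻ t in Iic a, F.measure (Iio t) ∂ν₁) ≠ ∞ := by
      refine ne_top_of_le_ne_top (nu1_fin h a hcont hmono C hbd) ?_
      calc ∫⁻ t in Iic a, F.measure (Iio t) ∂ν₁ ≤ ∫⁻ _ in Iic a, (1 : ℝ≥0∞) ∂ν₁ :=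
            setLIntegral_mono' measurableSet_Iic fun t _ => prob_le_one
        _ = ν₁ (Iic a) := setLIntegral_one _
    have hBfin : (∫⁻ t in Ioi a, F.measure (Ici t) ∂ν₂) ≠ ∞ := by
      refine ne_top_of_le_ne_top (nu2_fin h a hcont hanti C hbd) ?_
      calc ∫⁻ t in Ioi a, F.measure (Ici t) ∂ν₂ ≤ ∫⁻ _ in Ioi a, (1 : ℝ≥0∞) ∂ν₂ :=
            setLIntegral_mono' measurableSet_Ioi fun t _ => prob_le_one
        _ = ν₂ (Ioi a) := setLIntegral_one _
    have hA' := ENNReal.toReal_mono hAfin hAle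
    have hB' := ENNReal.toReal_mono hBfin hBle
    linarith
  refine ⟨⟨⟨Fs, hFsΦ, hVal.symm⟩, ?_⟩, Fs, hFsΦ, fun x => rfl, hVal.symm⟩
  rintro v ⟨F, hF, rfl⟩
  show ∫ x, h x ∂F.measure ≤ _
  rw [hVal]
  exact hub F hF
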